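/- Let R, α, β be real numbers with R ≤ 0 and α ≠ 0. Then there is no C², everywhere positive, periodic function φ : ℝ → ℝ satisfying φ''(t) = (1/8)(R·φ(t) − β²·φ(t)⁵ − α²·φ(t)⁻⁷) for all t ∈ ℝ. -/
import Mathlib


/-- nonpositive scalar curvature `R` is incompatible with existence
of positive periodic solutions of the reduced Lichnerowicz ODE when `α ≠ 0`. -/
theorem stmt_3 (R α β : ℝ) (hR : R ≤ 0) (hα : α ≠ 0) :
    ¬ ∃ φ : ℝ → ℝ, ContDiff ℝ 2 φ ∧ (∀ t, 0 < φ t) ∧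
      (∃ L : ℝ, 0 < L ∧ Function.Periodic φ L) ∧
      (∀ t, deriv (deriv φ) t
        = (1 / 8) * (R * φ t - β ^ 2 * (φ t) ^ 5 - α ^ 2 / (φ t) ^ 7)) := by
  rintro ⟨φ, hφ, hpos, ⟨L, hL, hper⟩, hode⟩
  -- second derivative is negative everywhere
  have hneg : ∀ t, deriv (deriv φ) t < 0 := by
    intro t
    rw [hode t]
    have h1 : R * φ t ≤ 0 := mul_nonpos_of_nonpos_of_nonneg hR (hpos t).le
    have h2 : 0 ≤ β ^ 2 * (φ t) ^ 5 :=
      mul_nonneg (sq_nonneg β) (pow_nonneg (hpos t).le 5)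
    have h3 : 0 < α ^ 2 / (φ t) ^ 7 :=
      div_pos (pow_pos (abs_pos.mpr hα) 2 |>.trans_eq (sq_abs α)) (pow_pos (hpos t) 7)
    nlinarith
  -- deriv φ is differentiable / continuous
  have hd1 : Differentiable ℝ φ := hφ.differentiable (by norm_num)
  have hd2 : Differentiable ℝ (deriv φ) :=
    (hφ.iterate_deriv' 1 1).differentiable (by norm_num)
  have hanti : StrictAnti (deriv φ) :=
    strictAnti_of_deriv_neg hneg
  have hper' : Function.Periodic (deriv φ) L := by
    intro x
    have : φ ∘ (· + L) = φ := funext fun y => hper y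
    calc deriv φ (x + L) = deriv (φ ∘ (· + L)) x := (deriv_comp_add_const φ L x).symm
      _ = deriv φ x := by rw [this]
  have := hanti (lt_add_of_pos_right (0 : ℝ) hL)
  rw [hper' 0] at this
  exact lt_irrefl _ this
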